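/- Let G be a group, let Z be a G-boundary, and let Y be a nonempty compact Hausdorff G-space on which the action of G is minimal. Then there is at most one continuous G-equivariant map from Y to Z: any two continuous G-equivariant maps ψ₁, ψ₂ : Y → Z are equal. -/

import Mathlib

open MeasureTheory

/-- The Dirac probability measure at a point. -/
noncomputable def diracProb {X : Type*} [MeasurableSpace X] (x : X) :
    ProbabilityMeasure X :=
  ⟨Measure.dirac x, inferInstance⟩

/-- The pushforward action of a group element on probability measures:
`(g • μ)(E) = μ (g⁻¹ • E)`. -/
noncomputable def pushforwardProb {G X : Type*} [Group G] [TopologicalSpace X]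
    [MeasurableSpace X] [BorelSpace X] [MulAction G X] [ContinuousConstSMul G X]
    (g : G) (μ : ProbabilityMeasure X) : ProbabilityMeasure X :=
  μ.map (f := fun x => g • x) ((continuous_const_smul g).measurable.aemeasurable)

/-- The action of `G` on `X` is minimal if every orbit is dense. -/
def IsMinimalAction (G X : Type*) [Group G] [TopologicalSpace X] [MulAction G X] : Prop :=
  ∀ x : X, Dense (MulAction.orbit G x)

/-- The action of `G` on `X` is strongly proximal if the weak-* closure of the orbit of every
probability measure on `X` contains a Dirac measure. -/
def IsStronglyProximal (G X : Type*) [Group G] [TopologicalSpace X] [MeasurableSpace X]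
    [BorelSpace X] [MulAction G X] [ContinuousConstSMul G X] : Prop :=
  ∀ μ : ProbabilityMeasure X, ∃ x : X,
    diracProb x ∈ closure {ν | ∃ g : G, ν = pushforwardProb g μ}

section Aux

open Filter Set

variable {Z : Type*} [MeasurableSpace Z]

/-- The balanced mixture `½ δ_a + ½ δ_b`. -/
noncomputable def mixM (a b : Z) : Measure Z :=
  (2 : ENNReal)⁻¹ • Measure.dirac a + (2 : ENNReal)⁻¹ • Measure.dirac b

instance mixM_isProb (a b : Z) : IsProbabilityMeasure (mixM a b) := by
  constructor
  simp [mixM, ENNReal.inv_two_add_inv_two]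

/-- The balanced mixture as a probability measure. -/
noncomputable def mixP (a b : Z) : ProbabilityMeasure Z :=
  ⟨mixM a b, inferInstance⟩

lemma lintegral_mixP (a b : Z) {f : Z → ENNReal} (hf : Measurable f) :
    ∫⁻ x, f x ∂(mixP a b : Measure Z) = 2⁻¹ * f a + 2⁻¹ * f b := by
  show ∫⁻ x, f x ∂(mixM a b) = _
  rw [mixM, lintegral_add_measure, lintegral_smul_measure, lintegral_smul_measure,
    lintegral_dirac' _ hf, lintegral_dirac' _ hf]
  simp only [smul_eq_mul]

end Aux

theorem test1 {Z Y : Type*} [TopologicalSpace Z] [MeasurableSpace Z] [BorelSpace Z]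
    [TopologicalSpace Y] {ψ₁ ψ₂ : Y → Z} (h₁c : Continuous ψ₁) (h₂c : Continuous ψ₂) :
    Continuous fun y => mixP (ψ₁ y) (ψ₂ y) := by
  rw [continuous_iff_continuousAt]
  intro y
  rw [ContinuousAt, ProbabilityMeasure.tendsto_iff_forall_lintegral_tendsto]
  intro f
  have hm : Measurable fun z => (f z : ENNReal) :=
    measurable_coe_nnreal_ennreal.comp f.continuous.measurable
  simp only [lintegral_mixP _ _ hm]
  refine Filter.Tendsto.add ?_ ?_
  · exact (ENNReal.Tendsto.const_mul
      (((ENNReal.continuous_coe.comp f.continuous).comp h₁c).tendsto y)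
      (Or.inr (by simp)))
  · exact (ENNReal.Tendsto.const_mul
      (((ENNReal.continuous_coe.comp f.continuous).comp h₂c).tendsto y)
      (Or.inr (by simp)))

theorem test2 {G Z : Type*} [Group G] [TopologicalSpace Z] [MeasurableSpace Z] [BorelSpace Z]
    [MulAction G Z] [ContinuousConstSMul G Z] (g : G) (a b : Z) :
    pushforwardProb g (mixP a b) = mixP (g • a) (g • b) := by
  apply Subtype.ext
  have h : (pushforwardProb g (mixP a b) : Measure Z)
      = (mixP a b : Measure Z).map (fun x => g • x) :=
    ProbabilityMeasure.toMeasure_map (mixP a b)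
      ((continuous_const_smul g).measurable.aemeasurable)
  refine h.trans ?_
  show (mixM a b).map _ = mixM _ _
  have hg : Measurable fun x : Z => g • x := (continuous_const_smul g).measurable
  rw [mixM, Measure.map_add _ _ hg, Measure.map_smul, Measure.map_smul,
    Measure.map_dirac' hg, Measure.map_dirac' hg, mixM]

theorem test3 {Z : Type*} [TopologicalSpace Z] [MeasurableSpace Z] [BorelSpace Z]
    (f : BoundedContinuousFunction Z NNReal) :
    Continuous fun ν : ProbabilityMeasure Z => ∫⁻ x, f x ∂(ν : Measure Z) := by
  rw [continuous_iff_continuousAt]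
  intro ν
  exact ProbabilityMeasure.tendsto_iff_forall_lintegral_tendsto.mp (Filter.tendsto_id (x := nhds ν)) f

open Filter

theorem equivariant_map_to_boundary_unique
    {G Z Y : Type*} [Group G]
    [TopologicalSpace Z] [CompactSpace Z] [T2Space Z] [Nonempty Z]
    [MeasurableSpace Z] [BorelSpace Z] [MulAction G Z] [ContinuousConstSMul G Z]
    [TopologicalSpace Y] [CompactSpace Y] [T2Space Y] [Nonempty Y]
    [MulAction G Y] [ContinuousConstSMul G Y]
    (hZmin : IsMinimalAction G Z) (hZprox : IsStronglyProximal G Z)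
    (hYmin : IsMinimalAction G Y)
    (ψ₁ ψ₂ : Y → Z) (h₁c : Continuous ψ₁) (h₁e : ∀ (g : G) (y : Y), ψ₁ (g • y) = g • ψ₁ y)
    (h₂c : Continuous ψ₂) (h₂e : ∀ (g : G) (y : Y), ψ₂ (g • y) = g • ψ₂ y) :
    ψ₁ = ψ₂ := by
  classical
  obtain ⟨y₀⟩ := ‹Nonempty Y›
  set F : Y → ProbabilityMeasure Z := fun y => mixP (ψ₁ y) (ψ₂ y) with hF
  have hFcont : Continuous F := test1 h₁c h₂c
  obtain ⟨z, hz⟩ := hZprox (F y₀)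
  set S : Set (ProbabilityMeasure Z) := {ν | ∃ g : G, ν = pushforwardProb g (F y₀)} with hS
  -- every element of S is in the range of F
  have hSrange : ∀ ν ∈ S, ∃ y : Y, F y = ν := by
    rintro ν ⟨g, rfl⟩
    refine ⟨g • y₀, ?_⟩
    rw [hF]
    simp only [h₁e, h₂e]
    exact (test2 g (ψ₁ y₀) (ψ₂ y₀)).symm
  -- the filter witnessing closure membership
  set ℱ : Filter (ProbabilityMeasure Z) := nhds (diracProb z) ⊓ 𝓟 S with hFil
  haveI hFne : ℱ.NeBot := mem_closure_iff_clusterPt.mp hz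
  haveI hcomapne : (Filter.comap F ℱ).NeBot := by
    rw [Filter.comap_neBot_iff]
    intro t ht
    have hts : t ∩ S ∈ ℱ := Filter.inter_mem ht (Filter.mem_inf_of_right (Filter.mem_principal_self S))
    obtain ⟨ν, hνt, hνS⟩ := Filter.nonempty_of_mem hts
    obtain ⟨y, hy⟩ := hSrange ν hνS
    exact ⟨y, hy ▸ hνt⟩
  obtain ⟨y, -, hy⟩ := isCompact_univ (f := Filter.comap F ℱ) (le_principal_iff.mpr Filter.univ_mem)
  -- F y and diracProb z are topologically inseparable
  have hmaple : Filter.map F (nhds y ⊓ Filter.comap F ℱ)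
      ≤ nhds (F y) ⊓ nhds (diracProb z) := by
    refine le_inf ?_ ?_
    · exact (Filter.map_mono inf_le_left).trans (hFcont.continuousAt)
    · exact ((Filter.map_mono inf_le_right).trans Filter.map_comap_le).trans inf_le_left
  haveI hmapne : (Filter.map F (nhds y ⊓ Filter.comap F ℱ)).NeBot := Filter.NeBot.map hy F
  haveI hinsep : (nhds (F y) ⊓ nhds (diracProb z)).NeBot :=
    Filter.neBot_of_le (f := Filter.map F (nhds y ⊓ Filter.comap F ℱ)) hmaple
  -- hence all lintegrals of bounded continuous functions agree
  have heval : ∀ f : BoundedContinuousFunction Z NNReal,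
      ∫⁻ x, f x ∂(F y : Measure Z) = f z := by
    intro f
    have hm : Measurable fun x : Z => (f x : ENNReal) :=
      measurable_coe_nnreal_ennreal.comp f.continuous.measurable
    have hc := test3 f
    have h1 : Filter.map (fun ν : ProbabilityMeasure Z => ∫⁻ x, f x ∂(ν : Measure Z))
        (nhds (F y) ⊓ nhds (diracProb z))
        ≤ nhds (∫⁻ x, f x ∂(F y : Measure Z)) ⊓ nhds (∫⁻ x, f x ∂(diracProb z : Measure Z)) :=
      le_inf ((Filter.map_mono inf_le_left).trans (hc.continuousAt))
        ((Filter.map_mono inf_le_right).trans (hc.continuousAt))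
    haveI := Filter.neBot_of_le h1
    have := eq_of_nhds_neBot this
    rw [this]
    show ∫⁻ x, (f x : ENNReal) ∂(Measure.dirac z) = _
    exact lintegral_dirac' z hm
  -- deduce ψ₁ y = z and ψ₂ y = z using Urysohn functions
  have key : ∀ a : Z, (∀ f : BoundedContinuousFunction Z NNReal,
      2⁻¹ * (f a : ENNReal) ≤ (f z : ENNReal)) → a = z := by
    intro a hfa
    by_contra hne
    obtain ⟨f, hf0, hf1, hf01⟩ := exists_continuous_zero_one_of_isClosed
      (isClosed_singleton (x := z)) (isClosed_singleton (x := a))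
      (Set.disjoint_singleton.mpr (Ne.symm hne))
    set g : BoundedContinuousFunction Z NNReal :=
      BoundedContinuousFunction.mkOfCompact
        ⟨fun x => Real.toNNReal (f x), continuous_real_toNNReal.comp f.continuous⟩ with hg
    have hga : (g a : ENNReal) = 1 := by
      have : f a = 1 := hf1 rfl
      simp [hg, this]
    have hgz : (g z : ENNReal) = 0 := by
      have : f z = 0 := hf0 rfl
      simp [hg, this]
    have := hfa g
    rw [hga, hgz, mul_one] at this
    exact (by norm_num : ¬ ((2 : ENNReal)⁻¹ ≤ 0)) this
  have hbound : ∀ (f : BoundedContinuousFunction Z NNReal),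
      2⁻¹ * (f (ψ₁ y) : ENNReal) + 2⁻¹ * (f (ψ₂ y) : ENNReal) = (f z : ENNReal) := by
    intro f
    have hm : Measurable fun x : Z => (f x : ENNReal) :=
      measurable_coe_nnreal_ennreal.comp f.continuous.measurable
    have := heval f
    rwa [hF, lintegral_mixP _ _ hm] at this
  have h1z : ψ₁ y = z := by
    refine key _ fun f => ?_
    rw [← hbound f]
    exact le_add_right le_rfl
  have h2z : ψ₂ y = z := by
    refine key _ fun f => ?_
    rw [← hbound f]
    exact le_add_left le_rfl
  -- conclude by minimality of Y
  have hE : MulAction.orbit G y ⊆ {w | ψ₁ w = ψ₂ w} := by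
    rintro w ⟨g, rfl⟩
    show ψ₁ (g • y) = ψ₂ (g • y)
    rw [h₁e, h₂e, h1z, h2z]
  funext w
  have hcl : closure (MulAction.orbit G y) ⊆ {w | ψ₁ w = ψ₂ w} :=
    (isClosed_eq h₁c h₂c).closure_subset_iff.mpr hE
  exact hcl (hYmin y w)
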